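/- For all ξ ≥ 31643, the root ξ₂ of (t² − t)/log t = ξ/log ξ with t > 1 satisfies ξ₂ < √(ξ/2) · (1 − (log 2)/(2 log ξ)). -/

import Mathlib

set_option maxHeartbeats 2000000

private lemma fmono15 : StrictMonoOn (fun t : ℝ => (t ^ 2 - t) / Real.log t) (Set.Ioi 1) := by
  apply strictMonoOn_of_deriv_pos (convex_Ioi 1)
  · apply ContinuousOn.div
    · fun_prop
    · apply Real.continuousOn_log.mono
      intro x hx
      simp only [Set.mem_Ioi] at hx
      simp only [Set.mem_compl_iff, Set.mem_singleton_iff]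
      intro h; rw [h] at hx; linarith
    · intro x hx
      exact ne_of_gt (Real.log_pos hx)
  · intro t ht
    rw [interior_Ioi] at ht
    have ht1 : (1:ℝ) < t := ht
    have ht0 : (0:ℝ) < t := by linarith
    have hlt : 0 < Real.log t := Real.log_pos ht1
    have h1 : HasDerivAt (fun x : ℝ => x ^ 2 - x) (2 * t - 1) t := by
      exact ((hasDerivAt_pow 2 t).sub (hasDerivAt_id' t)).congr_deriv (by norm_num)
    have hd : HasDerivAt (fun t : ℝ => (t ^ 2 - t) / Real.log t)
        (((2 * t - 1) * Real.log t - (t ^ 2 - t) * t⁻¹) / (Real.log t) ^ 2) t :=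
      h1.div (Real.hasDerivAt_log (ne_of_gt ht0)) (ne_of_gt hlt)
    rw [hd.deriv]
    apply div_pos
    · have hlog : 1 - t⁻¹ ≤ Real.log t := by
        have h := Real.log_le_sub_one_of_pos (show (0:ℝ) < t⁻¹ by positivity)
        rw [Real.log_inv] at h; linarith
      have h2 : (t ^ 2 - t) * t⁻¹ = t - 1 := by field_simp
      rw [h2]
      have h3 : (2 * t - 1) * (1 - t⁻¹) ≤ (2 * t - 1) * Real.log t :=
        mul_le_mul_of_nonneg_left hlog (by linarith)
      have h4 : t - 1 < (2 * t - 1) * (1 - t⁻¹) := by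
        have he : (2 * t - 1) * (1 - t⁻¹) - (t - 1) = (t - 1) ^ 2 / t := by
          field_simp; ring
        have hp : 0 < (t - 1) ^ 2 / t := div_pos (pow_pos (by linarith) 2) ht0
        linarith
      linarith
    · positivity

private lemma log31643_ge : (10.36227219 : ℝ) ≤ Real.log 31643 := by
  have hx : |(1125 / 32768 : ℝ)| < 1 := by rw [abs_of_pos (by norm_num)]; norm_num
  have h := Real.abs_log_sub_add_sum_range_le hx 4
  rw [abs_of_pos (by norm_num : (0:ℝ) < 1125 / 32768)] at h
  have hsum : ∑ i ∈ Finset.range 4, (1125 / 32768 : ℝ) ^ (i + 1) / (i + 1)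
      = 1125 / 32768 + (1125 / 32768 : ℝ) ^ 2 / 2 + (1125 / 32768 : ℝ) ^ 3 / 3
        + (1125 / 32768 : ℝ) ^ 4 / 4 := by
    simp [Finset.sum_range_succ]
    norm_num
  rw [hsum] at h
  rw [abs_le] at h
  have h31 : Real.log 31643 = 15 * Real.log 2 + Real.log (1 - 1125 / 32768) := by
    rw [show (31643:ℝ) = 2 ^ 15 * (1 - 1125 / 32768) by norm_num,
      Real.log_mul (by positivity) (by norm_num), Real.log_pow]
    push_cast; ring
  have hl2 := Real.log_two_gt_d9
  rw [h31]
  have h2 := h.1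
  norm_num at h2 ⊢
  nlinarith [h2, hl2]

private lemma log31643_le : Real.log 31643 ≤ 10.3622723 := by
  have hx : |(1125 / 32768 : ℝ)| < 1 := by rw [abs_of_pos (by norm_num)]; norm_num
  have h := Real.abs_log_sub_add_sum_range_le hx 4
  rw [abs_of_pos (by norm_num : (0:ℝ) < 1125 / 32768)] at h
  have hsum : ∑ i ∈ Finset.range 4, (1125 / 32768 : ℝ) ^ (i + 1) / (i + 1)
      = 1125 / 32768 + (1125 / 32768 : ℝ) ^ 2 / 2 + (1125 / 32768 : ℝ) ^ 3 / 3
        + (1125 / 32768 : ℝ) ^ 4 / 4 := by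
    simp [Finset.sum_range_succ]
    norm_num
  rw [hsum] at h
  rw [abs_le] at h
  have h31 : Real.log 31643 = 15 * Real.log 2 + Real.log (1 - 1125 / 32768) := by
    rw [show (31643:ℝ) = 2 ^ 15 * (1 - 1125 / 32768) by norm_num,
      Real.log_mul (by positivity) (by norm_num), Real.log_pow]
    push_cast; ring
  have hl2 := Real.log_two_lt_d9
  rw [h31]
  have h2 := h.2
  norm_num at h2 ⊢
  nlinarith [h2, hl2]

private lemma keypoly15 (L s l : ℝ) (hL : (10.36227219 : ℝ) ≤ L)
    (hl1 : (0.6931471803 : ℝ) ≤ l) (hl2 : l ≤ 0.6931471808)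
    (hs : 177.8847 * (1 + (L - 10.36227219) / 6) ^ 3 ≤ s) :
    (L - l / 2) * L ^ 5 < Real.sqrt 2 * s *
      ((l / 2 + l ^ 2 / 8) * L ^ 4 + (l ^ 2 / 8) * L ^ 3 + (l ^ 3 / 24) * L ^ 2
        + (l ^ 4 / 64) * L - (13 / 400) * l ^ 5) := by
  obtain ⟨u, hu, rfl⟩ : ∃ u, 0 ≤ u ∧ L = 10.36227219 + u :=
    ⟨L - 10.36227219, by linarith, by ring⟩
  have hs' : 177.8847 * (1 + u / 6) ^ 3 ≤ s := by
    have : (10.36227219 + u - 10.36227219) = u := by ring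
    rwa [this] at hs
  have hs0 : (0:ℝ) ≤ s := le_trans (by positivity) hs'
  have hr : (1.4142135 : ℝ) ≤ Real.sqrt 2 := by
    have h := Real.sq_sqrt (by norm_num : (0:ℝ) ≤ 2)
    nlinarith [Real.sqrt_nonneg 2]
  have hl0 : (0:ℝ) ≤ l := by linarith
  have hLpos : (0:ℝ) < 10.36227219 + u := by linarith
  have hp2 : (0.6931471803 : ℝ) ^ 2 ≤ l ^ 2 := by nlinarith
  have hp3 : (0.6931471803 : ℝ) ^ 3 ≤ l ^ 3 := by nlinarith
  have hp4 : (0.6931471803 : ℝ) ^ 4 ≤ l ^ 4 := by nlinarith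
  have hp5 : l ^ 5 ≤ (0.6931471808 : ℝ) ^ 5 := by nlinarith
  set B : ℝ := (0.6931471803 / 2 + 0.6931471803 ^ 2 / 8) * (10.36227219 + u) ^ 4
      + (0.6931471803 ^ 2 / 8) * (10.36227219 + u) ^ 3
      + (0.6931471803 ^ 3 / 24) * (10.36227219 + u) ^ 2
      + (0.6931471803 ^ 4 / 64) * (10.36227219 + u)
      - (13 / 400) * (0.6931471808 : ℝ) ^ 5 with hB
  have hBpos : 0 < B := by
    rw [hB]
    nlinarith [pow_pos hLpos 2, pow_pos hLpos 3, pow_pos hLpos 4]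
  have step1 : (10.36227219 + u - l / 2) * (10.36227219 + u) ^ 5
      ≤ (10.36227219 + u - 0.6931471803 / 2) * (10.36227219 + u) ^ 5 := by
    have h5 := pow_pos hLpos 5
    nlinarith [h5]
  have step2 : (10.36227219 + u - 0.6931471803 / 2) * (10.36227219 + u) ^ 5
      < 1.4142135 * (177.8847 * (1 + u / 6) ^ 3) * B := by
    rw [hB]
    nlinarith [hu, pow_nonneg hu 2, pow_nonneg hu 3, pow_nonneg hu 4,
      pow_nonneg hu 5, pow_nonneg hu 6, pow_nonneg hu 7]
  have step3 : 1.4142135 * (177.8847 * (1 + u / 6) ^ 3) * B ≤ Real.sqrt 2 * s * B := by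
    apply mul_le_mul_of_nonneg_right _ hBpos.le
    apply mul_le_mul hr hs' (by positivity) (Real.sqrt_nonneg 2)
  have step4 : Real.sqrt 2 * s * B ≤ Real.sqrt 2 * s *
      ((l / 2 + l ^ 2 / 8) * (10.36227219 + u) ^ 4 + (l ^ 2 / 8) * (10.36227219 + u) ^ 3
        + (l ^ 3 / 24) * (10.36227219 + u) ^ 2 + (l ^ 4 / 64) * (10.36227219 + u)
        - (13 / 400) * l ^ 5) := by
    apply mul_le_mul_of_nonneg_left _ (by positivity)
    rw [hB]
    nlinarith [mul_nonneg (sub_nonneg.2 hl1) (pow_pos hLpos 4).le,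
      mul_nonneg (sub_nonneg.2 hp2) (pow_pos hLpos 4).le,
      mul_nonneg (sub_nonneg.2 hp2) (pow_pos hLpos 3).le,
      mul_nonneg (sub_nonneg.2 hp3) (pow_pos hLpos 2).le,
      mul_nonneg (sub_nonneg.2 hp4) hLpos.le, hp5]
  linarith

theorem stmt15 (ξ ξ₂ : ℝ) (hξ : 31643 ≤ ξ) (hξ₂ : 1 < ξ₂)
    (heq : (ξ₂ ^ 2 - ξ₂) / Real.log ξ₂ = ξ / Real.log ξ) :
    ξ₂ < Real.sqrt (ξ / 2) * (1 - Real.log 2 / (2 * Real.log ξ)) := by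
  have hξ0 : (0:ℝ) < ξ := by linarith
  obtain ⟨L, hLdef⟩ : ∃ L, L = Real.log ξ := ⟨_, rfl⟩
  rw [← hLdef] at heq ⊢
  obtain ⟨l, hldef⟩ : ∃ l, l = Real.log 2 := ⟨_, rfl⟩
  rw [← hldef]
  obtain ⟨w, hwdef⟩ : ∃ w, w = Real.sqrt (ξ / 2) := ⟨_, rfl⟩
  rw [← hwdef]
  obtain ⟨ε, hεdef⟩ : ∃ e, e = l / (2 * L) := ⟨_, rfl⟩
  rw [show l / (2 * L) = ε from hεdef.symm]
  obtain ⟨s, hsdef⟩ : ∃ s, s = Real.sqrt ξ := ⟨_, rfl⟩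
  have hl1 : (0.6931471803 : ℝ) ≤ l := by rw [hldef]; exact Real.log_two_gt_d9.le
  have hl2 : l ≤ 0.6931471808 := by rw [hldef]; exact Real.log_two_lt_d9.le
  have hl0 : (0:ℝ) < l := by linarith
  have hL : (10.36227219 : ℝ) ≤ L := by
    rw [hLdef]
    refine le_trans log31643_ge ?_
    exact Real.log_le_log (by norm_num) hξ
  have hL0 : (0:ℝ) < L := by linarith
  have hε0 : 0 < ε := by rw [hεdef]; positivity
  have hε26 : ε ≤ 1 / 26 := by
    rw [hεdef, div_le_iff₀ (by positivity)]
    linarith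
  have hone_sub : (0:ℝ) < 1 - ε := by linarith
  have hwpos : 0 < w := by rw [hwdef]; exact Real.sqrt_pos.mpr (div_pos hξ0 two_pos)
  have hspos : 0 < s := by rw [hsdef]; exact Real.sqrt_pos.mpr hξ0
  have hs2 : s ^ 2 = ξ := by rw [hsdef]; exact Real.sq_sqrt hξ0.le
  have hw125 : (125:ℝ) ≤ w := by
    rw [hwdef]
    have h1 : Real.sqrt 15625 ≤ Real.sqrt (ξ / 2) := Real.sqrt_le_sqrt (by linarith)
    rwa [show (15625:ℝ) = 125 ^ 2 by norm_num,
      Real.sqrt_sq (by norm_num : (0:ℝ) ≤ 125)] at h1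
  have hΦ1 : (1:ℝ) < w * (1 - ε) := by
    have h := mul_le_mul hw125 (show (25/26:ℝ) ≤ 1 - ε by linarith) (by norm_num)
      (by linarith : (0:ℝ) ≤ w)
    linarith
  have hΦpos : (0:ℝ) < w * (1 - ε) := mul_pos hwpos hone_sub
  -- log of Phi
  have hlogΦ : Real.log (w * (1 - ε)) = (L - l) / 2 + Real.log (1 - ε) := by
    rw [hwdef, Real.log_mul (ne_of_gt (Real.sqrt_pos.mpr (div_pos hξ0 two_pos)))
      (ne_of_gt hone_sub), Real.log_sqrt (div_nonneg hξ0.le two_pos.le),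
      Real.log_div (ne_of_gt hξ0) (by norm_num), ← hLdef, ← hldef]
  have hloginv : (1 - ε)⁻¹ ≤ 26 / 25 := by
    have hmul : (1 - ε) * (1 - ε)⁻¹ = 1 := mul_inv_cancel₀ hone_sub.ne'
    nlinarith [inv_pos.mpr hone_sub]
  have hloglb : 1 - (1 - ε)⁻¹ ≤ Real.log (1 - ε) := by
    have h := Real.log_le_sub_one_of_pos (inv_pos.mpr hone_sub)
    rw [Real.log_inv] at h; linarith
  have hlogΦpos : 0 < Real.log (w * (1 - ε)) := by
    rw [hlogΦ]
    have : Real.log (1 - ε) ≥ -2 / 25 := by linarith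
    linarith
  -- upper bound on log(1-ε)
  have hε1 : |ε| < 1 := by rw [abs_of_pos hε0]; linarith
  have habs := Real.abs_log_sub_add_sum_range_le hε1 4
  rw [abs_of_pos hε0] at habs
  have hsum : ∑ i ∈ Finset.range 4, ε ^ (i + 1) / (i + 1)
      = ε + ε ^ 2 / 2 + ε ^ 3 / 3 + ε ^ 4 / 4 := by
    simp [Finset.sum_range_succ]
    norm_num
  rw [hsum, abs_le] at habs
  have h5 : ε ^ 5 / (1 - ε) ≤ (26 / 25) * ε ^ 5 := by
    rw [div_le_iff₀ hone_sub]
    have h6 := mul_le_mul_of_nonneg_left hε26 (pow_nonneg hε0.le 5)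
    nlinarith [pow_nonneg hε0.le 5, h6]
  have hlogle : Real.log (1 - ε) ≤ -(ε + ε ^ 2 / 2 + ε ^ 3 / 3 + ε ^ 4 / 4)
      + (26 / 25) * ε ^ 5 := by
    have h := habs.2
    norm_num at h
    linarith
  -- lower bound for s
  have hexpL : Real.exp (L / 2) ^ 2 = ξ := by
    rw [sq, ← Real.exp_add, add_halves, hLdef, Real.exp_log hξ0]
  have hsexp : s = Real.exp (L / 2) := by
    rw [hsdef, ← hexpL, Real.sqrt_sq (Real.exp_pos _).le]
  have e2 : Real.exp (10.36227219 : ℝ)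
      = 31643 * Real.exp ((10.36227219 : ℝ) - Real.log 31643) := by
    rw [Real.exp_sub, Real.exp_log (by norm_num : (0:ℝ) < 31643)]
    field_simp
  have e3 : (31642.99 : ℝ) ≤ Real.exp (10.36227219 : ℝ) := by
    have h1 := Real.add_one_le_exp ((10.36227219 : ℝ) - Real.log 31643)
    have h2 := log31643_le
    rw [e2]; nlinarith
  have hlead : (177.8847 : ℝ) ≤ Real.exp ((10.36227219 : ℝ) / 2) := by
    have hp := Real.exp_pos ((10.36227219 : ℝ) / 2)
    have hsq : Real.exp ((10.36227219 : ℝ) / 2) ^ 2 = Real.exp (10.36227219 : ℝ) := by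
      rw [sq, ← Real.exp_add]; norm_num
    nlinarith [hp, hsq, e3]
  have hcube : (1 + (L - 10.36227219) / 6) ^ 3 ≤ Real.exp ((L - 10.36227219) / 2) := by
    have h6 : Real.exp ((L - 10.36227219) / 6) ^ 3 = Real.exp ((L - 10.36227219) / 2) := by
      rw [pow_succ, pow_succ, pow_one, ← Real.exp_add, ← Real.exp_add]
      congr 1; ring
    rw [← h6]
    apply pow_le_pow_left₀ (by linarith)
    have := Real.add_one_le_exp ((L - 10.36227219) / 6)
    linarith
  have hsl : 177.8847 * (1 + (L - 10.36227219) / 6) ^ 3 ≤ s := by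
    have heq2 : s = Real.exp ((10.36227219 : ℝ) / 2) * Real.exp ((L - 10.36227219) / 2) := by
      rw [hsexp, ← Real.exp_add]; congr 1; ring
    rw [heq2]
    exact mul_le_mul hlead hcube (pow_nonneg (by linarith) 3) (Real.exp_pos _).le
  -- main key inequality
  have K := keypoly15 L s l hL hl1 hl2 hsl
  obtain ⟨X, hXdef⟩ : ∃ X, X = l ^ 2 / (8 * L) + (ε + ε ^ 2 / 2 + ε ^ 3 / 3 + ε ^ 4 / 4)
      - (26 / 25) * ε ^ 5 := ⟨_, rfl⟩
  have hsqrt2pos : (0:ℝ) < Real.sqrt 2 := Real.sqrt_pos.mpr (by norm_num)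
  have hstep' : s * (1 - ε) * L < Real.sqrt 2 * s ^ 2 * X := by
    have hfac : (0:ℝ) < s / L ^ 5 := div_pos hspos (pow_pos hL0 5)
    have K2 := mul_lt_mul_of_pos_right K hfac
    have eL : (L - l / 2) * L ^ 5 * (s / L ^ 5) = s * (1 - ε) * L := by
      rw [hεdef]; field_simp
    have eR : Real.sqrt 2 * s *
        ((l / 2 + l ^ 2 / 8) * L ^ 4 + (l ^ 2 / 8) * L ^ 3 + (l ^ 3 / 24) * L ^ 2
          + (l ^ 4 / 64) * L - (13 / 400) * l ^ 5) * (s / L ^ 5)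
        = Real.sqrt 2 * s ^ 2 * X := by
      rw [hXdef, hεdef]; field_simp; ring
    rw [eL, eR] at K2
    exact K2
  have hw_eq : w * Real.sqrt 2 = s := by
    rw [hwdef, hsdef, ← Real.sqrt_mul (div_nonneg hξ0.le two_pos.le), div_mul_cancel₀]
    norm_num
  have hstep : w * (1 - ε) * L < ξ * X := by
    have hc : w * (1 - ε) * L * Real.sqrt 2 < ξ * X * Real.sqrt 2 := by
      calc w * (1 - ε) * L * Real.sqrt 2 = s * (1 - ε) * L := by rw [← hw_eq]; ring
        _ < Real.sqrt 2 * s ^ 2 * X := hstep'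
        _ = ξ * X * Real.sqrt 2 := by rw [hs2]; ring
    exact lt_of_mul_lt_mul_right hc hsqrt2pos.le
  have hident : (ξ / 2) * (1 - ε) ^ 2 * L - ξ * X
      = ξ * ((L - l) / 2) + ξ * (-(ε + ε ^ 2 / 2 + ε ^ 3 / 3 + ε ^ 4 / 4)
        + (26 / 25) * ε ^ 5) := by
    rw [hXdef, hεdef]; field_simp; ring
  have hΦ2 : (w * (1 - ε)) ^ 2 = (ξ / 2) * (1 - ε) ^ 2 := by
    rw [mul_pow, hwdef, Real.sq_sqrt (div_nonneg hξ0.le two_pos.le)]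
  have hkey : ξ * Real.log (w * (1 - ε)) < ((w * (1 - ε)) ^ 2 - w * (1 - ε)) * L := by
    have hub : ξ * Real.log (1 - ε) ≤ ξ * (-(ε + ε ^ 2 / 2 + ε ^ 3 / 3 + ε ^ 4 / 4)
        + (26 / 25) * ε ^ 5) := mul_le_mul_of_nonneg_left hlogle hξ0.le
    have hexp : ((w * (1 - ε)) ^ 2 - w * (1 - ε)) * L
        = (ξ / 2) * (1 - ε) ^ 2 * L - w * (1 - ε) * L := by rw [hΦ2]; ring
    rw [hexp, hlogΦ]
    linarith [hstep, hub, hident]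
  have hfΦ : ξ / L < ((w * (1 - ε)) ^ 2 - w * (1 - ε)) / Real.log (w * (1 - ε)) :=
    (div_lt_div_iff₀ hL0 hlogΦpos).mpr hkey
  -- conclude by monotonicity
  rcases lt_or_ge ξ₂ (w * (1 - ε)) with h | h
  · exact h
  · exfalso
    have hmem1 : w * (1 - ε) ∈ Set.Ioi (1:ℝ) := hΦ1
    have hmem2 : ξ₂ ∈ Set.Ioi (1:ℝ) := hξ₂
    have hle : ((w * (1 - ε)) ^ 2 - w * (1 - ε)) / Real.log (w * (1 - ε))
        ≤ (ξ₂ ^ 2 - ξ₂) / Real.log ξ₂ := by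
      have := fmono15.monotoneOn hmem1 hmem2 h
      simpa using this
    rw [heq] at hle
    linarith
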